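/- For every integer d ≥ 2, the map ψ_o : D^{d-1} → SC_d(1,1;o) defined by ψ_o(x) = ((x/2 + P_{1/4}, 1/4), ((−x_1/2, …, −x_{d-1}/2, 0), 1/2)) is well defined, i.e. for every x ∈ D^{d-1} the ball (x/2 + P_{1/4}, 1/4) is contained in the closed upper unit semiball, the semiball ((−x_1/2,…,−x_{d-1}/2,0), 1/2) is contained in the closed upper unit semiball, and the two are nonoverlapping; moreover ψ_o is a topological embedding, and its restriction to S^{d-2} is the map x ↦ ((x/2 + P_{1/4}, 1/4), (−x/2, 1/2)). -/

import Mathlib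

noncomputable section

/-- The last index of `Fin d` (corresponding to the last coordinate `x_d`). -/
def lastIdx (d : ℕ) (hd : 2 ≤ d) : Fin d := ⟨d - 1, by omega⟩

/-- The point `P_{1/4} = (0, …, 0, 1/4)` of `ℝ^d`. -/
def Pquarter (d : ℕ) (hd : 2 ≤ d) : EuclideanSpace ℝ (Fin d) :=
  EuclideanSpace.single (lastIdx d hd) 4⁻¹

/-- The configuration space `SC_d(1,1;o)` of one ball and one nonoverlapping semiball in
the closed upper unit semiball of `ℝ^d`. -/
def SC11 (d : ℕ) (hd : 2 ≤ d) :
    Set ((EuclideanSpace ℝ (Fin d) × ℝ) × (EuclideanSpace ℝ (Fin d) × ℝ)) :=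
  {c | 0 < c.1.2 ∧ 0 < c.2.2 ∧
       c.1.1 (lastIdx d hd) ≥ c.1.2 ∧ ‖c.1.1‖ + c.1.2 ≤ 1 ∧
       c.2.1 (lastIdx d hd) = 0 ∧ ‖c.2.1‖ + c.2.2 ≤ 1 ∧
       ‖c.1.1 - c.2.1‖ ≥ c.1.2 + c.2.2}

/-- The closed disc `D^{d-1} = {x ∈ S^{d-1} : x_d ≥ 0}`. -/
def upperHemi (d : ℕ) (hd : 2 ≤ d) : Set (EuclideanSpace ℝ (Fin d)) :=
  {z | ‖z‖ = 1 ∧ z (lastIdx d hd) ≥ 0}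

/-- The raw formula of `ψ_o`, sending `x` to
`((x/2 + P_{1/4}, 1/4), ((−x_1/2, …, −x_{d-1}/2, 0), 1/2))`; the second center is
`−x/2` with its last coordinate replaced by `0`. -/
def psiO (d : ℕ) (hd : 2 ≤ d) :
    EuclideanSpace ℝ (Fin d) →
      (EuclideanSpace ℝ (Fin d) × ℝ) × (EuclideanSpace ℝ (Fin d) × ℝ) :=
  fun x =>
    (((2 : ℝ)⁻¹ • x + Pquarter d hd, 4⁻¹),
     (-((2 : ℝ)⁻¹ • x) + EuclideanSpace.single (lastIdx d hd) (x (lastIdx d hd) / 2), 2⁻¹))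


open RealInnerProductSpace

lemma single_cont (d : ℕ) (i : Fin d) : Continuous (fun a : ℝ => EuclideanSpace.single i a) :=
  (Isometry.of_dist_eq (fun a b => EuclideanSpace.dist_single_same i a b)).continuous

lemma abs_coord_le (d : ℕ) (i : Fin d) (x : EuclideanSpace ℝ (Fin d)) : |x i| ≤ ‖x‖ := by
  have h := abs_real_inner_le_norm (EuclideanSpace.single i (1:ℝ)) x
  simpa [EuclideanSpace.inner_single_left] using h

lemma psiO_cont (d : ℕ) (hd : 2 ≤ d) : Continuous (psiO d hd) := by
  unfold psiO
  refine Continuous.prodMk (Continuous.prodMk ?_ continuous_const)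
    (Continuous.prodMk ?_ continuous_const)
  · exact (continuous_const_smul _).add continuous_const
  · exact ((continuous_const_smul _).neg).add
      ((single_cont d _).comp (((EuclideanSpace.proj (𝕜 := ℝ) (lastIdx d hd)).continuous).div_const 2))

lemma hemi_compact (d : ℕ) (hd : 2 ≤ d) : IsCompact (upperHemi d hd) := by
  apply Metric.isCompact_of_isClosed_isBounded
  · exact (isClosed_eq continuous_norm continuous_const).inter
      (isClosed_le continuous_const (EuclideanSpace.proj (𝕜 := ℝ) (lastIdx d hd)).continuous)
  · exact (Metric.isBounded_closedBall (x := (0 : EuclideanSpace ℝ (Fin d))) (r := 1)).subset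
      (fun z hz => by simp [Metric.mem_closedBall, dist_zero_right, hz.1, le_refl])

lemma psiO_inj (d : ℕ) (hd : 2 ≤ d) : Function.Injective (psiO d hd) := by
  intro a b h
  have h1 : (2:ℝ)⁻¹ • a + Pquarter d hd = (2:ℝ)⁻¹ • b + Pquarter d hd := congrArg (·.1.1) h
  have h2 : (2:ℝ)⁻¹ • a = (2:ℝ)⁻¹ • b := add_right_cancel h1
  have := congrArg (fun v => (2:ℝ) • v) h2
  simpa [smul_smul] using this

lemma psiO_mem (d : ℕ) (hd : 2 ≤ d) : ∀ x ∈ upperHemi d hd, psiO d hd x ∈ SC11 d hd := by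
  rintro x ⟨hx, ht0⟩
  set i := lastIdx d hd
  set t := x i with htdef
  have ht1 : t ≤ 1 := by
    have := abs_coord_le d i x
    rw [hx] at this
    exact (abs_le.mp this).2
  have hP : ‖Pquarter d hd‖ = 4⁻¹ := by
    rw [Pquarter, EuclideanSpace.norm_single]; norm_num
  simp only [SC11, psiO, Set.mem_setOf_eq]
  refine ⟨by norm_num, by norm_num, ?_, ?_, ?_, ?_, ?_⟩
  · show ((2:ℝ)⁻¹ • x + Pquarter d hd) i ≥ _
    have : ((2:ℝ)⁻¹ • x + Pquarter d hd) i = 2⁻¹ * t + 4⁻¹ := by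
      simp [Pquarter, EuclideanSpace.single_apply, i]
      rfl
    rw [this]; nlinarith
  · have h1 : ‖(2:ℝ)⁻¹ • x + Pquarter d hd‖ ≤ 2⁻¹ + 4⁻¹ := by
      calc ‖(2:ℝ)⁻¹ • x + Pquarter d hd‖ ≤ ‖(2:ℝ)⁻¹ • x‖ + ‖Pquarter d hd‖ := norm_add_le _ _
      _ = 2⁻¹ + 4⁻¹ := by rw [norm_smul, hx, hP]; norm_num
    show ‖_‖ + (4:ℝ)⁻¹ ≤ 1
    linarith
  · show (-((2:ℝ)⁻¹ • x) + EuclideanSpace.single i (t / 2)) i = 0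
    simp [EuclideanSpace.single_apply, ← htdef]
    ring
  · show ‖-((2:ℝ)⁻¹ • x) + EuclideanSpace.single i (t / 2)‖ + (2:ℝ)⁻¹ ≤ 1
    have hsq : ‖-((2:ℝ)⁻¹ • x) + EuclideanSpace.single i (t / 2)‖ ^ 2 = 4⁻¹ - t^2/4 := by
      rw [norm_add_sq_real]
      have hi : (inner ℝ (-((2:ℝ)⁻¹ • x)) (EuclideanSpace.single i (t / 2)) : ℝ) = -(2⁻¹ * t * (t/2)) := by
        rw [real_inner_comm, EuclideanSpace.inner_single_left]
        simp [← htdef]; ring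
      rw [hi, norm_neg, norm_smul, hx]
      simp [EuclideanSpace.norm_single]
      rw [div_pow, sq_abs]
      ring
    nlinarith [norm_nonneg (-((2:ℝ)⁻¹ • x) + EuclideanSpace.single i (t / 2)), sq_nonneg (‖-((2:ℝ)⁻¹ • x) + EuclideanSpace.single i (t / 2)‖ - 2⁻¹), sq_nonneg t]
  · show ‖((2:ℝ)⁻¹ • x + Pquarter d hd) - (-((2:ℝ)⁻¹ • x) + EuclideanSpace.single i (t / 2))‖ ≥ 4⁻¹ + 2⁻¹
    have hv : ((2:ℝ)⁻¹ • x + Pquarter d hd) - (-((2:ℝ)⁻¹ • x) + EuclideanSpace.single i (t / 2))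
        = x + EuclideanSpace.single i (4⁻¹ - t/2) := by
      apply PiLp.ext; intro j
      simp [Pquarter, EuclideanSpace.single_apply, ← htdef, show lastIdx d hd = i from rfl]
      by_cases hj : j = i <;> simp [hj] <;> ring
    rw [hv]
    have hsq : ‖x + EuclideanSpace.single i (4⁻¹ - t/2)‖ ^ 2
        = 1 + 2 * ((4⁻¹ - t/2) * t) + (4⁻¹ - t/2)^2 := by
      rw [norm_add_sq_real, real_inner_comm, EuclideanSpace.inner_single_left]
      simp [hx, ← htdef, sq_abs]
      try rw [sq_abs]
      try ring
    nlinarith [norm_nonneg (x + EuclideanSpace.single i (4⁻¹ - t/2))]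

/-- For every integer `d ≥ 2`, the map `ψ_o : D^{d-1} → SC_d(1,1;o)`,
`x ↦ ((x/2 + P_{1/4}, 1/4), ((−x_1/2, …, −x_{d-1}/2, 0), 1/2))`, is well defined,
is a topological embedding, and its restriction to `S^{d-2}` is the map
`x ↦ ((x/2 + P_{1/4}, 1/4), (−x/2, 1/2))`. -/
theorem swissCheese_psiO_embedding (d : ℕ) (hd : 2 ≤ d) :
    (∀ x ∈ upperHemi d hd, psiO d hd x ∈ SC11 d hd) ∧
    Topology.IsEmbedding (fun x : upperHemi d hd => psiO d hd x.1) ∧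
    (∀ x ∈ upperHemi d hd, x (lastIdx d hd) = 0 →
      psiO d hd x = (((2 : ℝ)⁻¹ • x + Pquarter d hd, 4⁻¹), (-((2 : ℝ)⁻¹ • x), 2⁻¹))) := by
  refine ⟨psiO_mem d hd, ?_, ?_⟩
  · have : CompactSpace (upperHemi d hd) := isCompact_iff_compactSpace.mp (hemi_compact d hd)
    exact (((psiO_cont d hd).comp continuous_subtype_val).isClosedEmbedding
      (fun a b h => Subtype.ext (psiO_inj d hd h))).isEmbedding
  · intro x _ h
    have hz : EuclideanSpace.single (lastIdx d hd) ((0:ℝ)) = 0 := by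
      ext j; simp [EuclideanSpace.single_apply]
    simp [psiO, h, hz]
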